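/- For all real vectors t₁, t₂ ∈ ℝ^N, not both zero, and 1 < p ≤ 2, there exists a constant C > 0 (depending only on p) such that ⟨|t₁|^{p-2} t₁ - |t₂|^{p-2} t₂, t₁ - t₂⟩ ≥ C |t₁ - t₂|² / (|t₁| + |t₂|)^{2-p}. -/

import Mathlib

open Real NNReal

lemma aux_rpow_mul_self {x : ℝ} (hx : 0 ≤ x) {q : ℝ} (hq : q + 1 ≠ 0) :
    x ^ q * x = x ^ (q + 1) := by
  rcases eq_or_lt_of_le hx with h | h
  · rw [← h, Real.zero_rpow hq, mul_zero]
  · rw [Real.rpow_add_one h.ne']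

lemma aux_subadd {α β q : ℝ} (hα : 0 ≤ α) (hβ : 0 ≤ β) (hq0 : 0 ≤ q) (hq1 : q ≤ 1) :
    (α + β) ^ q ≤ α ^ q + β ^ q := by
  have h := NNReal.rpow_add_le_add_rpow α.toNNReal β.toNNReal hq0 hq1
  have h2 := NNReal.coe_le_coe.mpr h
  push_cast [NNReal.coe_rpow, Real.coe_toNNReal _ hα, Real.coe_toNNReal _ hβ] at h2
  exact h2

lemma aux_tangent {α β q : ℝ} (hβ : 0 ≤ β) (hβα : β ≤ α) (hα : 0 < α)
    (hq0 : 0 ≤ q) (hq1 : q ≤ 1) :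
    α ^ q - β ^ q ≥ q * (α ^ (q - 1)) * (α - β) := by
  set s : ℝ := β / α - 1 with hs
  have hs1 : -1 ≤ s := by
    have : 0 ≤ β / α := div_nonneg hβ hα.le
    simp only [hs]; linarith
  have hB := rpow_one_add_le_one_add_mul_self hs1 hq0 hq1
  have h1s : 1 + s = β / α := by simp [hs]
  rw [h1s, Real.div_rpow hβ hα.le] at hB
  have hαq : (0:ℝ) < α ^ q := Real.rpow_pos_of_pos hα q
  have h3 := (div_le_iff₀ hαq).mp hB
  have hpow : α ^ (q - 1) * α = α ^ q := by
    rw [← Real.rpow_add_one hα.ne']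
    ring_nf
  have hsα : s * α = β - α := by rw [hs, sub_mul, div_mul_cancel₀ β hα.ne', one_mul]
  have key : q * s * α ^ q = q * α ^ (q-1) * (β - α) := by rw [← hpow, ← hsα]; ring
  linarith [h3, key]

lemma aux1 {x p : ℝ} (hx : 0 ≤ x) (hp : 1 < p) : x ^ (p-2) * x = x ^ (p-1) := by
  rw [aux_rpow_mul_self hx (q := p-2) (by intro h; nlinarith)]
  ring_nf

lemma aux2 {x p : ℝ} (hx : 0 ≤ x) (hp : 1 < p) : x ^ (p-1) * x = x ^ p := by
  rw [aux_rpow_mul_self hx (q := p-1) (by intro h; nlinarith)]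
  ring_nf

-- endpoint c = -αβ
lemma auxE1 {p α β : ℝ} (hp1 : 1 < p) (hp2 : p ≤ 2) (hα : 0 ≤ α) (hβ : 0 ≤ β)
    (hs : 0 < α + β) :
    α ^ p + β ^ p + (α ^ (p-2) + β ^ (p-2)) * (α * β)
      ≥ (p-1) * ((α+β)^2) * (α+β) ^ (p-2) := by
  have h1 := aux1 hα hp1
  have h2 := aux1 hβ hp1
  have h3 := aux2 hα hp1
  have h4 := aux2 hβ hp1
  have h5 := aux1 hs.le hp1
  have hsub := aux_subadd hα hβ (q := p-1) (by linarith) (by linarith)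
  have hpos : (0:ℝ) ≤ (α+β) ^ (p-1) := Real.rpow_nonneg hs.le _
  -- (p-1)(α+β)^(p-1) ≤ (α+β)^(p-1) ≤ α^(p-1)+β^(p-1)
  have key : (p-1) * (α+β) ^ (p-1) ≤ α ^ (p-1) + β ^ (p-1) := by nlinarith
  have hl : α ^ p + β ^ p + (α ^ (p-2) + β ^ (p-2)) * (α * β)
      = (α ^ (p-1) + β ^ (p-1)) * (α+β) := by
    rw [← h3, ← h4, ← h1, ← h2]; ring
  have hr : (p-1) * ((α+β)^2) * (α+β) ^ (p-2) = ((p-1) * (α+β) ^ (p-1)) * (α+β) := by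
    rw [← h5]; ring
  rw [hl, hr]
  exact mul_le_mul_of_nonneg_right key hs.le

-- endpoint c = αβ, assuming β ≤ α
lemma auxE2' {p α β : ℝ} (hp1 : 1 < p) (hp2 : p ≤ 2) (hβ : 0 ≤ β) (hβα : β ≤ α)
    (hs : 0 < α + β) :
    α ^ p + β ^ p - (α ^ (p-2) + β ^ (p-2)) * (α * β)
      ≥ (p-1) * ((α-β)^2) * (α+β) ^ (p-2) := by
  have hα : 0 < α := by linarith
  have h1 := aux1 hα.le hp1
  have h2 := aux1 hβ hp1
  have h3 := aux2 hα.le hp1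
  have h4 := aux2 hβ hp1
  have htan := aux_tangent hβ hβα hα (q := p-1) (by linarith) (by linarith)
  rw [show p - 1 - 1 = p - 2 by ring] at htan
  have hmono : (α+β) ^ (p-2) ≤ α ^ (p-2) :=
    Real.rpow_le_rpow_of_nonpos hα (by linarith) (by linarith)
  -- α^(p-1) - β^(p-1) ≥ (p-1) α^(p-2) (α-β) ≥ (p-1)(α+β)^(p-2)(α-β)
  have hab : 0 ≤ α - β := by linarith
  have hp1' : 0 ≤ p - 1 := by linarith
  have step : α ^ (p-1) - β ^ (p-1) ≥ (p-1) * (α+β) ^ (p-2) * (α-β) := by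
    nlinarith [mul_le_mul_of_nonneg_right (mul_le_mul_of_nonneg_left hmono hp1') hab]
  -- multiply by (α - β) ≥ 0
  nlinarith [mul_le_mul_of_nonneg_right step.le hab]

lemma auxE2 {p α β : ℝ} (hp1 : 1 < p) (hp2 : p ≤ 2) (hα : 0 ≤ α) (hβ : 0 ≤ β)
    (hs : 0 < α + β) :
    α ^ p + β ^ p - (α ^ (p-2) + β ^ (p-2)) * (α * β)
      ≥ (p-1) * ((α-β)^2) * (α+β) ^ (p-2) := by
  rcases le_total β α with h | h
  · exact auxE2' hp1 hp2 hβ h hs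
  · have := auxE2' hp1 hp2 hα h (by linarith)
    have e : (β - α)^2 = (α - β)^2 := by ring
    rw [e, add_comm β α] at this
    nlinarith [this]

lemma aux_key {p α β c : ℝ} (hp1 : 1 < p) (hp2 : p ≤ 2) (hα : 0 ≤ α) (hβ : 0 ≤ β)
    (hs : 0 < α + β) (hc : |c| ≤ α * β) :
    α ^ p + β ^ p - (α ^ (p-2) + β ^ (p-2)) * c
      ≥ (p-1) * (α^2 + β^2 - 2*c) * (α+β) ^ (p-2) := by
  obtain ⟨hc1, hc2⟩ := abs_le.mp hc
  have hE1 := auxE1 hp1 hp2 hα hβ hs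
  have hE2 := auxE2 hp1 hp2 hα hβ hs
  set B : ℝ := 2 * (p-1) * (α+β) ^ (p-2) - (α ^ (p-2) + β ^ (p-2)) with hB
  rcases le_or_gt 0 B with h | h
  · nlinarith [mul_le_mul_of_nonneg_left (by linarith : -(α*β) ≤ c) h]
  · nlinarith [mul_le_mul_of_nonneg_left (by linarith : c ≤ α*β) (by linarith : 0 ≤ -B)]

theorem pLaplacian_monotonicity_p_le_two (p : ℝ) (hp1 : 1 < p) (hp2 : p ≤ 2) :
    ∃ C > (0:ℝ), ∀ (N : ℕ) (t₁ t₂ : EuclideanSpace ℝ (Fin N)), ¬(t₁ = 0 ∧ t₂ = 0) →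
      (inner ℝ ((‖t₁‖ ^ (p - 2)) • t₁ - (‖t₂‖ ^ (p - 2)) • t₂) (t₁ - t₂) : ℝ) ≥
        C * ‖t₁ - t₂‖ ^ (2:ℝ) / (‖t₁‖ + ‖t₂‖) ^ (2 - p) := by
  refine ⟨p - 1, by linarith, fun N t₁ t₂ hne => ?_⟩
  set α := ‖t₁‖ with hα
  set β := ‖t₂‖ with hβ
  have hα0 : 0 ≤ α := norm_nonneg _
  have hβ0 : 0 ≤ β := norm_nonneg _
  have hs : 0 < α + β := by
    rcases not_and_or.mp hne with h | h
    · have : 0 < α := norm_pos_iff.mpr h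
      linarith
    · have : 0 < β := norm_pos_iff.mpr h
      linarith
  set c : ℝ := inner ℝ t₁ t₂ with hc
  have habs : |c| ≤ α * β := abs_real_inner_le_norm t₁ t₂
  -- expand inner product
  have hexp : (inner ℝ ((α ^ (p - 2)) • t₁ - (β ^ (p - 2)) • t₂) (t₁ - t₂) : ℝ)
      = α ^ (p-2) * α * α + β ^ (p-2) * β * β - (α ^ (p-2) + β ^ (p-2)) * c := by
    have hc' : (inner ℝ t₂ t₁ : ℝ) = c := by rw [hc]; exact real_inner_comm t₁ t₂
    simp only [inner_sub_left, inner_sub_right, real_inner_smul_left,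
      real_inner_self_eq_norm_sq, hc', ← hc, ← hα, ← hβ]
    ring
  have e1 : α ^ (p-2) * α * α = α ^ p := by rw [aux1 hα0 hp1, aux2 hα0 hp1]
  have e2 : β ^ (p-2) * β * β = β ^ p := by rw [aux1 hβ0 hp1, aux2 hβ0 hp1]
  rw [hexp, e1, e2]
  -- rewrite RHS
  have hnorm : ‖t₁ - t₂‖ ^ (2:ℝ) = α^2 + β^2 - 2*c := by
    have h2 : ‖t₁ - t₂‖ ^ (2:ℝ) = ‖t₁ - t₂‖ ^ (2:ℕ) := by
      rw [← Real.rpow_natCast]; norm_num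
    rw [h2, norm_sub_sq_real, ← hc, ← hα, ← hβ]
    ring
  have hdiv : (α + β) ^ (2 - p) = ((α + β) ^ (p - 2))⁻¹ := by
    rw [show (2 - p) = -(p-2) by ring, Real.rpow_neg hs.le]
  rw [hnorm, hdiv, div_eq_mul_inv, inv_inv]
  exact aux_key hp1 hp2 hα0 hβ0 hs habs
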